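/- For every real θ, the controlled-X-rotation gate satisfies the local-unitary decomposition CR_X(θ) = (H ⊗ R_X(θ/2)) · R_XX(−θ/2) · (H ⊗ I₂), i.e., the 4×4 matrix identity (|0⟩⟨0| ⊗ I₂ + |1⟩⟨1| ⊗ exp(−i(θ/2)X)) = (H ⊗ exp(−i(θ/4)X)) · exp(i(θ/4)(X ⊗ X)) · (H ⊗ I₂). -/

import Mathlib

open Matrix Complex Kronecker
open scoped ComplexOrder

noncomputable section

/-- A density matrix: positive semidefinite with trace 1. -/
def IsDensityMatrix {d : Type*} [Fintype d] (ρ : Matrix d d ℂ) : Prop :=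
  ρ.PosSemidef ∧ ρ.trace = 1

/-- A separable state on a bipartite system: a finite convex combination of Kronecker
products of density matrices. -/
def SeparableState {dA dB : Type*} [Fintype dA] [Fintype dB]
    (ρ : Matrix (dA × dB) (dA × dB) ℂ) : Prop :=
  ∃ (n : ℕ) (p : Fin n → ℝ) (σ : Fin n → Matrix dA dA ℂ) (τ : Fin n → Matrix dB dB ℂ),
    (∀ k, 0 ≤ p k) ∧ (∑ k, p k) = 1 ∧
    (∀ k, IsDensityMatrix (σ k)) ∧ (∀ k, IsDensityMatrix (τ k)) ∧
    ρ = ∑ k, (p k : ℂ) • ((σ k) ⊗ₖ (τ k))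

/-- The robustness of entanglement. -/
def robustness {dA dB : Type*} [Fintype dA] [Fintype dB]
    (ρ : Matrix (dA × dB) (dA × dB) ℂ) : ℝ :=
  sInf { t : ℝ | 0 ≤ t ∧ ∃ σ : Matrix (dA × dB) (dA × dB) ℂ,
    SeparableState σ ∧ SeparableState (((1 + t : ℝ) : ℂ)⁻¹ • (ρ + (t : ℂ) • σ)) }

/-- γ(ρ): optimal one-norm of a quasiprobability decomposition into separable states. -/
def gammaSep {dA dB : Type*} [Fintype dA] [Fintype dB]
    (ρ : Matrix (dA × dB) (dA × dB) ℂ) : ℝ :=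
  sInf { c : ℝ | ∃ (ap am : ℝ) (ρp ρm : Matrix (dA × dB) (dA × dB) ℂ),
    0 ≤ ap ∧ 0 ≤ am ∧ SeparableState ρp ∧ SeparableState ρm ∧
    ρ = (ap : ℂ) • ρp - (am : ℂ) • ρm ∧ c = ap + am }

/-- Singular values of a complex matrix: square roots of eigenvalues of `Mᴴ * M`. -/
def singularValues {m n : Type*} [Fintype m] [Fintype n] [DecidableEq n]
    (M : Matrix m n ℂ) : n → ℝ :=
  fun i => Real.sqrt ((Matrix.isHermitian_conjTranspose_mul_self M).eigenvalues i)

/-- Pauli X. -/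
def PX : Matrix (Fin 2) (Fin 2) ℂ := !![0, 1; 1, 0]
/-- Pauli Y. -/
def PY : Matrix (Fin 2) (Fin 2) ℂ := !![0, -Complex.I; Complex.I, 0]
/-- Pauli Z. -/
def PZ : Matrix (Fin 2) (Fin 2) ℂ := !![1, 0; 0, -1]


lemma Uinv : (!![1, 1; 1, -1] : Matrix (Fin 2) (Fin 2) ℂ)⁻¹ = (2⁻¹ : ℂ) • !![1, 1; 1, -1] := by
  apply Matrix.inv_eq_right_inv
  ext i j
  fin_cases i <;> fin_cases j <;>
    simp [Matrix.mul_apply, Fin.sum_univ_succ] <;> ring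

lemma Uunit : IsUnit (!![1, 1; 1, -1] : Matrix (Fin 2) (Fin 2) ℂ) := by
  apply Matrix.isUnit_iff_isUnit_det _ |>.mpr
  simp [Matrix.det_fin_two]
  norm_num

lemma expX (c : ℂ) : NormedSpace.exp (c • PX) =
    !![(Complex.exp c + Complex.exp (-c))/2, (Complex.exp c - Complex.exp (-c))/2;
       (Complex.exp c - Complex.exp (-c))/2, (Complex.exp c + Complex.exp (-c))/2] := by
  have h : c • PX = !![1, 1; 1, -1] * Matrix.diagonal ![c, -c] * (!![1, 1; 1, -1] : Matrix (Fin 2) (Fin 2) ℂ)⁻¹ := by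
    rw [Uinv]
    ext i j
    fin_cases i <;> fin_cases j <;>
      simp [PX, Matrix.mul_apply, Fin.sum_univ_succ, Matrix.diagonal, Matrix.vecHead, Matrix.vecTail, ← Complex.exp_eq_exp_ℂ] <;> ring
  rw [h, Matrix.exp_conj _ _ Uunit, Matrix.exp_diagonal, Uinv]
  ext i j
  fin_cases i <;> fin_cases j <;>
    simp [Matrix.mul_apply, Fin.sum_univ_succ, Matrix.diagonal, Matrix.vecHead, Matrix.vecTail, ← Complex.exp_eq_exp_ℂ] <;> ring

noncomputable def U4 : Matrix (Fin 2 × Fin 2) (Fin 2 × Fin 2) ℂ :=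
  (!![1, 1; 1, -1] : Matrix (Fin 2) (Fin 2) ℂ) ⊗ₖ (!![1, 1; 1, -1] : Matrix (Fin 2) (Fin 2) ℂ)

lemma U4inv : U4⁻¹ = (4⁻¹ : ℂ) • U4 := by
  apply Matrix.inv_eq_right_inv
  ext i j
  fin_cases i <;> fin_cases j <;>
    simp [U4, Matrix.mul_apply, Fintype.sum_prod_type, Fin.sum_univ_succ, Matrix.one_apply, Prod.ext_iff] <;> ring

lemma U4unit : IsUnit U4 := by
  rw [Matrix.isUnit_iff_isUnit_det, U4, Matrix.det_kronecker]
  simp [Matrix.det_fin_two]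
  norm_num

lemma expXX (c : ℂ) : NormedSpace.exp (c • (PX ⊗ₖ PX)) =
    U4 * Matrix.diagonal (fun p : Fin 2 × Fin 2 =>
      Complex.exp (if p.1 = p.2 then c else -c)) * ((4⁻¹ : ℂ) • U4) := by
  have h : c • (PX ⊗ₖ PX) = U4 * Matrix.diagonal (fun p : Fin 2 × Fin 2 =>
      if p.1 = p.2 then c else -c) * U4⁻¹ := by
    rw [U4inv]
    ext i j
    fin_cases i <;> fin_cases j <;>
      simp [U4, PX, Matrix.mul_apply, Fintype.sum_prod_type, Fin.sum_univ_succ,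
        Matrix.diagonal] <;> ring
  rw [h, Matrix.exp_conj _ _ U4unit, Matrix.exp_diagonal, U4inv]
  congr 1
  ext p
  simp [← Complex.exp_eq_exp_ℂ]
lemma expX' (c : ℂ) : NormedSpace.exp (c • PX) =
    ((Complex.exp c + Complex.exp (-c))/2) • (1 : Matrix (Fin 2) (Fin 2) ℂ)
      + ((Complex.exp c - Complex.exp (-c))/2) • PX := by
  rw [expX]
  ext i j
  fin_cases i <;> fin_cases j <;>
    simp [PX, Matrix.one_apply] <;> ring

lemma expXX' (c : ℂ) : NormedSpace.exp (c • (PX ⊗ₖ PX)) =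
    ((Complex.exp c + Complex.exp (-c))/2) • (1 : Matrix (Fin 2 × Fin 2) (Fin 2 × Fin 2) ℂ)
      + ((Complex.exp c - Complex.exp (-c))/2) • (PX ⊗ₖ PX) := by
  rw [expXX]
  ext ⟨i1, i2⟩ ⟨j1, j2⟩
  fin_cases i1 <;> fin_cases i2 <;> fin_cases j1 <;> fin_cases j2 <;>
    · simp only [Matrix.mul_apply, Fintype.sum_prod_type, Fin.sum_univ_succ, Finset.sum_empty,
        Finset.univ_unique, Finset.sum_singleton]
      simp only [U4, PX, Matrix.kroneckerMap_apply, Matrix.smul_apply, Matrix.one_apply,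
        Matrix.diagonal_apply, Prod.mk.injEq, Matrix.add_apply, smul_eq_mul]
      norm_num [Matrix.cons_val', Matrix.cons_val_zero, Matrix.cons_val_one, Matrix.vecHead,
        Matrix.vecTail, Matrix.of_apply] <;>
      ring

set_option maxHeartbeats 8000000 in
theorem CRX_eq_local_RXX (θ : ℝ) :
    (!![1, 0; 0, 0] : Matrix (Fin 2) (Fin 2) ℂ) ⊗ₖ (1 : Matrix (Fin 2) (Fin 2) ℂ)
      + (!![0, 0; 0, 1] : Matrix (Fin 2) (Fin 2) ℂ) ⊗ₖ
          NormedSpace.exp ((-(Complex.I * (θ / 2))) • PX) =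
    ((((Real.sqrt 2)⁻¹ : ℝ) : ℂ) • (!![1, 1; 1, -1] : Matrix (Fin 2) (Fin 2) ℂ)) ⊗ₖ
        NormedSpace.exp ((-(Complex.I * (θ / 4))) • PX)
      * NormedSpace.exp ((Complex.I * (θ / 4)) • (PX ⊗ₖ PX))
      * ((((Real.sqrt 2)⁻¹ : ℝ) : ℂ) • (!![1, 1; 1, -1] : Matrix (Fin 2) (Fin 2) ℂ)) ⊗ₖ
          (1 : Matrix (Fin 2) (Fin 2) ℂ) := by
  have hs : ((((Real.sqrt 2)⁻¹ : ℝ) : ℂ)) * (((Real.sqrt 2)⁻¹ : ℝ) : ℂ) = 2⁻¹ := by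
    rw [← Complex.ofReal_mul, ← mul_inv, Real.mul_self_sqrt (by norm_num)]
    norm_num
  have ha : Complex.exp (-(Complex.I * (θ / 4))) ≠ 0 := Complex.exp_ne_zero _
  have h3 : Complex.exp (-(Complex.I * (θ / 2)))
      = Complex.exp (-(Complex.I * (θ / 4))) * Complex.exp (-(Complex.I * (θ / 4))) := by
    rw [← Complex.exp_add]; ring_nf
  have h2 : Complex.exp (Complex.I * (θ / 4))
      = (Complex.exp (-(Complex.I * (θ / 4))))⁻¹ := by
    rw [← Complex.exp_neg]; ring_nf
  have h4 : Complex.exp (Complex.I * (θ / 2))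
      = (Complex.exp (-(Complex.I * (θ / 4))))⁻¹ * (Complex.exp (-(Complex.I * (θ / 4))))⁻¹ := by
    rw [← mul_inv, ← h3, ← Complex.exp_neg]; ring_nf
  rw [expX', expX', expXX']
  simp only [neg_neg]
  rw [h3, h4, h2]
  generalize hag : Complex.exp (-(Complex.I * (θ / 4))) = a at ha
  rw [Matrix.smul_kronecker, Matrix.smul_kronecker, Matrix.smul_mul, Matrix.mul_smul,
    Matrix.smul_mul, smul_smul, hs]
  ext ⟨i1, i2⟩ ⟨j1, j2⟩
  fin_cases i1 <;> fin_cases i2 <;> fin_cases j1 <;> fin_cases j2 <;>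
    · simp only [Matrix.add_apply, Matrix.kroneckerMap_apply, Matrix.smul_apply, smul_eq_mul]
      simp only [Matrix.mul_apply, Fintype.sum_prod_type, Fin.sum_univ_succ, Finset.sum_empty,
        Finset.univ_unique, Finset.sum_singleton]
      simp only [PX, Matrix.kroneckerMap_apply, Matrix.smul_apply, Matrix.one_apply,
        Matrix.add_apply, Prod.mk.injEq, smul_eq_mul]
      norm_num [Matrix.cons_val', Matrix.cons_val_zero, Matrix.cons_val_one, Matrix.vecHead,
        Matrix.vecTail, Matrix.of_apply] <;>
      field_simp <;>
      ring
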